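/- Let Θ' ⊂ [−π, π] be a compact set with more than one point such that Θ' ≠ [−π, π] has an extreme point θ_e, and let {P_θ : θ ∈ Θ'} be pairwise mutually absolutely continuous probability measures. Then there is no measurable g with range in Θ' that is unbiased, i.e., E_{P_θ}[g] = θ for all θ ∈ Θ'. In particular, restricting a circular parameter to a compact proper subset of [−π, π] with an extreme point precludes (standard) unbiased estimation. -/

import Mathlib

open MeasureTheory

theorem no_unbiased_periodic {X : Type*} [MeasurableSpace X]
    (Θ' : Set ℝ) (hsub : Θ' ⊆ Set.Icc (-Real.pi) Real.pi)
    (hproper : Θ' ≠ Set.Icc (-Real.pi) Real.pi)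
    (hcpt : IsCompact Θ') (hne : ∃ a ∈ Θ', ∃ b ∈ Θ', a ≠ b)
    (θe : ℝ) (hθe : θe ∈ Set.extremePoints ℝ Θ')
    (P : ℝ → Measure X)
    (hP : ∀ θ ∈ Θ', IsProbabilityMeasure (P θ))
    (hac : ∀ θ ∈ Θ', ∀ θ'' ∈ Θ', P θ ≪ P θ'') :
    ¬ ∃ g : X → ℝ, Measurable g ∧ (∀ x, g x ∈ Θ') ∧
      (∀ θ ∈ Θ', Integrable g (P θ)) ∧
      (∀ θ ∈ Θ', ∫ x, g x ∂(P θ) = θ) := by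
  rintro ⟨g, hgm, hgr, hgi, hgu⟩
  obtain ⟨a, ha, b, hb, hab⟩ := hne
  have hΘne : Θ'.Nonempty := ⟨a, ha⟩
  have hbdd : BddAbove Θ' := hcpt.bddAbove
  have hbdd' : BddBelow Θ' := hcpt.bddBelow
  have hMmem := hcpt.sSup_mem hΘne
  have hmmem := hcpt.sInf_mem hΘne
  have hθeΘ : θe ∈ Θ' := hθe.1
  have hcase : θe = sSup Θ' ∨ θe = sInf Θ' := by
    by_contra h
    push_neg at h
    obtain ⟨h1, h2⟩ := h
    have hlt1 : θe < sSup Θ' := lt_of_le_of_ne (le_csSup hbdd hθeΘ) h1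
    have hlt2 : sInf Θ' < θe := lt_of_le_of_ne (csInf_le hbdd' hθeΘ) (Ne.symm h2)
    have hseg : θe ∈ openSegment ℝ (sInf Θ') (sSup Θ') := by
      rw [openSegment_eq_Ioo (hlt2.trans hlt1)]
      exact ⟨hlt2, hlt1⟩
    exact absurd (hθe.2 hmmem hMmem hseg) (ne_of_lt hlt2)
  haveI hPθe := hP θe hθeΘ
  have hgint := hgi θe hθeΘ
  have hIθe : ∫ x, g x ∂(P θe) = θe := hgu θe hθeΘ
  have key : g =ᵐ[P θe] fun _ => θe := by
    rcases hcase with hM | hm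
    · have hle : ∀ x, g x ≤ θe := fun x => hM ▸ le_csSup hbdd (hgr x)
      have hint : Integrable (fun x => θe - g x) (P θe) :=
        (integrable_const θe).sub hgint
      have h0 : ∫ x, (θe - g x) ∂(P θe) = 0 := by
        rw [integral_sub (integrable_const θe) hgint, hIθe]
        simp
      have hz := (integral_eq_zero_iff_of_nonneg
        (fun x => sub_nonneg.2 (hle x)) hint).1 h0
      filter_upwards [hz] with x hx
      have hx' : θe - g x = 0 := hx
      linarith
    · have hle : ∀ x, θe ≤ g x := fun x => hm ▸ csInf_le hbdd' (hgr x)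
      have hint : Integrable (fun x => g x - θe) (P θe) :=
        hgint.sub (integrable_const θe)
      have h0 : ∫ x, (g x - θe) ∂(P θe) = 0 := by
        rw [integral_sub hgint (integrable_const θe), hIθe]
        simp
      have hz := (integral_eq_zero_iff_of_nonneg
        (fun x => sub_nonneg.2 (hle x)) hint).1 h0
      filter_upwards [hz] with x hx
      have hx' : g x - θe = 0 := hx
      linarith
  -- pick θ ∈ Θ' with θ ≠ θe
  obtain ⟨θ, hθΘ, hθne⟩ : ∃ θ ∈ Θ', θ ≠ θe := by
    by_cases hA : a = θe
    · exact ⟨b, hb, by rw [← hA]; exact hab.symm⟩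
    · exact ⟨a, ha, hA⟩
  haveI hPθ := hP θ hθΘ
  have hac' : P θ ≪ P θe := hac θ hθΘ θe hθeΘ
  have key' : g =ᵐ[P θ] fun _ => θe := hac'.ae_le key
  have : θ = θe := by
    rw [← hgu θ hθΘ, integral_congr_ae key']
    simp
  exact hθne this
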